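/- arXiv:2411.17622 — 3 statements merged into one kernel-verified Lean document; each statement's English description precedes it below -/
import Mathlib

section
/- Let {x_n} and {y_n} be sequences of non-negative real numbers, and let a > 0 and b ≥ 0 be real numbers such that x_{n+1} ≤ b·x_n + a·y_n for all n ≫ 1. Then limsup_{n→∞} x_n^{1/n} ≤ max(b, limsup_{n→∞} y_n^{1/n}). -/
open CategoryTheory Filter IsLocalRing
open scoped ENNReal

noncomputable section

/-- The complexity of a sequence of reals: the smallest `b : ℕ` such that
`a n ≤ α * n ^ (b - 1)` for some `α > 0` and all large `n`; `⊤` if none exists. -/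
def seqCx (a : ℕ → ℝ) : ℕ∞ :=
  sInf {b : ℕ∞ | ∃ c : ℕ, b = c ∧ ∃ α : ℝ, 0 < α ∧
    ∀ᶠ n in atTop, a n ≤ α * (n : ℝ) ^ ((c : ℤ) - 1)}

/-- The curvature of a sequence: `limsup aₙ^{1/n}` (valued in `ℝ≥0∞`). -/
def seqCurv (a : ℕ → ℝ) : ℝ≥0∞ :=
  atTop.limsup fun n => (ENNReal.ofReal (a n)) ^ (1 / (n : ℝ))


theorem stmt2 (x y : ℕ → ℝ) (hx : ∀ n, 0 ≤ x n) (hy : ∀ n, 0 ≤ y n)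
    (a b : ℝ) (ha : 0 < a) (hb : 0 ≤ b)
    (h : ∀ᶠ n in atTop, x (n + 1) ≤ b * x n + a * y n) :
    seqCurv x ≤ max (ENNReal.ofReal b) (seqCurv y) := by
  unfold seqCurv
  set M := max (ENNReal.ofReal b) (atTop.limsup fun n => (ENNReal.ofReal (y n)) ^ (1 / (n : ℝ)))
    with hM
  apply le_of_forall_gt_imp_ge_of_dense
  intro c hc
  obtain ⟨r', hMr', hr'c⟩ := ENNReal.lt_iff_exists_nnreal_btwn.mp hc
  obtain ⟨q, hMq, hqr'⟩ := ENNReal.lt_iff_exists_nnreal_btwn.mp hMr'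
  refine le_trans ?_ hr'c.le
  have hq0 : (0:ℝ) < q := by
    have : (0:ℝ≥0∞) < q := lt_of_le_of_lt (zero_le : (0:ℝ≥0∞) ≤ M) hMq
    exact_mod_cast this
  have hqr : (q:ℝ) < r' := by exact_mod_cast hqr'
  have hr0 : (0:ℝ) < r' := hq0.trans hqr
  have hbq : b < (q:ℝ) := by
    have h1 : ENNReal.ofReal b < (q : ℝ≥0∞) := lt_of_le_of_lt (le_max_left _ _) hMq
    rw [← ENNReal.ofReal_coe_nnreal] at h1
    exact lt_of_not_ge fun hcon => absurd h1 (not_lt.mpr (ENNReal.ofReal_le_ofReal hcon))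
  -- eventually y n ≤ q ^ n
  have hyev : ∀ᶠ n in atTop, y n ≤ (q:ℝ) ^ n := by
    have h1 : ∀ᶠ n in atTop, (ENNReal.ofReal (y n)) ^ (1 / (n : ℝ)) < (q : ℝ≥0∞) :=
      eventually_lt_of_limsup_lt (lt_of_le_of_lt (le_max_right _ _) hMq)
    filter_upwards [h1, eventually_ge_atTop 1] with n hn hn1
    have hnpos : (0:ℝ) < n := by exact_mod_cast hn1
    have h2 : ((ENNReal.ofReal (y n)) ^ (1 / (n : ℝ))) ^ (n:ℝ) ≤ ((q : ℝ≥0∞)) ^ (n:ℝ) :=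
      ENNReal.rpow_le_rpow hn.le (le_of_lt hnpos)
    rw [← ENNReal.rpow_mul, one_div, inv_mul_cancel₀ (ne_of_gt hnpos), ENNReal.rpow_one,
      ENNReal.rpow_natCast, ← ENNReal.coe_pow, ← ENNReal.ofReal_coe_nnreal] at h2
    have h3 := (ENNReal.ofReal_le_ofReal_iff (by positivity)).mp h2
    rwa [NNReal.coe_pow] at h3
  obtain ⟨N, hN⟩ := eventually_atTop.mp (h.and hyev)
  -- induction bound
  have key : ∀ k, x (N + k) ≤ (x N + a * k * (q:ℝ) ^ N / q) * (q:ℝ) ^ k := by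
    intro k
    induction k with
    | zero => simp
    | succ k ih =>
      have hstep := (hN (N + k) (Nat.le_add_right _ _)).1
      have hyk := (hN (N + k) (Nat.le_add_right _ _)).2
      have h1 : x (N + (k + 1)) ≤ (q:ℝ) * x (N + k) + a * (q:ℝ) ^ (N + k) := by
        rw [show N + (k+1) = N + k + 1 from rfl]
        calc x (N + k + 1) ≤ b * x (N + k) + a * y (N + k) := hstep
          _ ≤ (q:ℝ) * x (N + k) + a * (q:ℝ) ^ (N + k) := by
              gcongr
              all_goals first | exact hx _ | exact hyk
      calc x (N + (k + 1)) ≤ (q:ℝ) * x (N + k) + a * (q:ℝ) ^ (N + k) := h1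
        _ ≤ (q:ℝ) * ((x N + a * k * (q:ℝ) ^ N / q) * (q:ℝ) ^ k) + a * (q:ℝ) ^ (N + k) := by
            gcongr
        _ = (x N + a * ↑(k + 1) * (q:ℝ) ^ N / q) * (q:ℝ) ^ (k + 1) := by
            push_cast
            field_simp
            ring
  -- polynomial bound
  set C : ℝ := (x N / (q:ℝ) ^ N + a / q) with hC
  have hxN := hx N
  have hC0 : 0 ≤ C := by positivity
  have poly : ∀ n ≥ N, x n ≤ C * (n + 1) * (q:ℝ) ^ n := by
    intro n hn
    obtain ⟨k, rfl⟩ := Nat.exists_eq_add_of_le hn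
    have hqN : (0:ℝ) < (q:ℝ) ^ N := by positivity
    have hcoef : x N + a * k * (q:ℝ) ^ N / q ≤ C * ((N:ℝ) + k + 1) * (q:ℝ) ^ N := by
      have expand : C * ((N:ℝ) + k + 1) * (q:ℝ) ^ N
          = x N * ((N:ℝ) + k + 1) + a * ((N:ℝ) + k + 1) * (q:ℝ) ^ N / q := by
        rw [hC]; field_simp
      rw [expand]
      have hA : x N ≤ x N * ((N:ℝ) + k + 1) :=
        le_mul_of_one_le_right hxN (by linarith [Nat.cast_nonneg (α := ℝ) N, Nat.cast_nonneg (α := ℝ) k])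
      have hB : a * k * (q:ℝ) ^ N / q ≤ a * ((N:ℝ) + k + 1) * (q:ℝ) ^ N / q := by
        gcongr
        all_goals linarith [Nat.cast_nonneg (α := ℝ) N]
      linarith
    calc x (N + k) ≤ (x N + a * k * (q:ℝ) ^ N / q) * (q:ℝ) ^ k := key k
      _ ≤ (C * ((N:ℝ) + k + 1) * (q:ℝ) ^ N) * (q:ℝ) ^ k :=
          mul_le_mul_of_nonneg_right hcoef (by positivity)
      _ = C * (↑(N + k) + 1) * (q:ℝ) ^ (N + k) := by rw [pow_add]; push_cast; ring
  -- eventually C * (n+1) * q^n ≤ r'^n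
  have hratio : |(q:ℝ) / r'| < 1 := by
    rw [abs_of_pos (by positivity), div_lt_one hr0]; exact hqr
  have htend : Tendsto (fun n : ℕ => C * (((n:ℝ) + 1) * ((q:ℝ)/r') ^ n)) atTop (nhds 0) := by
    have h1 : Summable fun n : ℕ => ((n:ℝ)) ^ 1 * ((q:ℝ)/r') ^ n := by
      have := summable_norm_pow_mul_geometric_of_norm_lt_one (R := ℝ) 1
        (by rwa [Real.norm_eq_abs])
      exact this.of_norm
    have h2 : Summable fun n : ℕ => ((q:ℝ)/r') ^ n :=
      summable_geometric_of_abs_lt_one hratio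
    have h3 := (h1.add h2).tendsto_atTop_zero
    have h4 : Tendsto (fun n : ℕ => ((n:ℝ) + 1) * ((q:ℝ)/r') ^ n) atTop (nhds 0) := by
      convert h3 using 2 with n
      ring
    simpa using h4.const_mul C
  have ev2 : ∀ᶠ n : ℕ in atTop, C * ((n:ℝ) + 1) * (q:ℝ) ^ n ≤ (r':ℝ) ^ n := by
    have h5 : ∀ᶠ n : ℕ in atTop, C * (((n:ℝ) + 1) * ((q:ℝ)/r') ^ n) < 1 :=
      htend.eventually_lt_const one_pos
    filter_upwards [h5] with n hn
    have hrpow : (0:ℝ) < (r':ℝ) ^ n := by positivity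
    have : C * (((n:ℝ) + 1) * ((q:ℝ)/r') ^ n) * (r':ℝ) ^ n ≤ 1 * (r':ℝ) ^ n :=
      mul_le_mul_of_nonneg_right hn.le hrpow.le
    calc C * ((n:ℝ) + 1) * (q:ℝ) ^ n
        = C * (((n:ℝ) + 1) * ((q:ℝ)/r') ^ n) * (r':ℝ) ^ n := by
          rw [div_pow]
          field_simp
      _ ≤ 1 * (r':ℝ) ^ n := this
      _ = (r':ℝ) ^ n := one_mul _
  -- conclude
  apply Filter.limsup_le_of_le (by isBoundedDefault)
  filter_upwards [eventually_ge_atTop N, eventually_ge_atTop 1, ev2] with n hnN hn1 hev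
  have hxn : x n ≤ (r':ℝ) ^ n := le_trans (poly n hnN) hev
  have hnpos : (0:ℝ) < n := by exact_mod_cast hn1
  have h6 : ENNReal.ofReal (x n) ≤ ((r' : ℝ≥0∞)) ^ (n:ℝ) := by
    rw [ENNReal.rpow_natCast, ← ENNReal.coe_pow, ← ENNReal.ofReal_coe_nnreal]
    exact ENNReal.ofReal_le_ofReal (by rwa [NNReal.coe_pow])
  have h7 := ENNReal.rpow_le_rpow h6 (le_of_lt (one_div_pos.mpr hnpos))
  rwa [← ENNReal.rpow_mul, mul_one_div, div_self (ne_of_gt hnpos), ENNReal.rpow_one] at h7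

end
end

section
/- Let {x_n} be a sequence of non-negative integers and let a, b be positive real numbers. Then limsup_{n→∞} (a·x_{n+1} + b·x_n)^{1/n} = limsup_{n→∞} x_n^{1/n}. -/
open CategoryTheory Filter IsLocalRing
open scoped ENNReal NNReal Topology

noncomputable section

lemma aux_tendsto_one (K : ℝ≥0∞) (h0 : K ≠ 0) (hT : K ≠ ⊤) :
    Tendsto (fun n : ℕ => K ^ (1 / (n : ℝ))) atTop (𝓝 1) := by
  lift K to ℝ≥0 using hT
  have hk0 : K ≠ 0 := by simpa using h0
  have hreal : Tendsto (fun n : ℕ => (K : ℝ) ^ (1 / (n : ℝ))) atTop (𝓝 1) := by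
    have := Filter.Tendsto.rpow (f := fun _ : ℕ => (K : ℝ)) (g := fun n : ℕ => 1 / (n : ℝ))
      (x := (K : ℝ)) (y := 0) tendsto_const_nhds tendsto_one_div_atTop_nhds_zero_nat
      (Or.inl (by exact_mod_cast hk0))
    simpa using this
  have hnn : Tendsto (fun n : ℕ => K ^ (1 / (n : ℝ))) atTop (𝓝 (1 : ℝ≥0)) := by
    rw [← NNReal.tendsto_coe]
    simpa [NNReal.coe_rpow] using hreal
  have := (ENNReal.tendsto_coe (f := atTop)
    (m := fun n : ℕ => K ^ (1 / (n : ℝ))) (a := 1)).2 hnn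
  simpa [ENNReal.coe_rpow_of_ne_zero hk0] using this

theorem stmt3 (x : ℕ → ℕ) (a b : ℝ) (ha : 0 < a) (hb : 0 < b) :
    seqCurv (fun n => a * (x (n + 1) : ℝ) + b * (x n : ℝ)) =
      seqCurv (fun n => (x n : ℝ)) := by
  set A := ENNReal.ofReal a with hA
  set B := ENNReal.ofReal b with hB
  have hA0 : A ≠ 0 := by simp [hA, ENNReal.ofReal_eq_zero, not_le, ha]
  have hB0 : B ≠ 0 := by simp [hB, ENNReal.ofReal_eq_zero, not_le, hb]
  have hAT : A ≠ ⊤ := ENNReal.ofReal_ne_top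
  have hBT : B ≠ ⊤ := ENNReal.ofReal_ne_top
  have hF : ∀ n : ℕ, ENNReal.ofReal (a * (x (n+1) : ℝ) + b * (x n : ℝ))
      = A * (x (n+1) : ℝ≥0∞) + B * (x n : ℝ≥0∞) := by
    intro n
    rw [ENNReal.ofReal_add (by positivity) (by positivity), ENNReal.ofReal_mul ha.le,
      ENNReal.ofReal_mul hb.le, ENNReal.ofReal_natCast, ENNReal.ofReal_natCast]
  simp only [seqCurv, hF, ENNReal.ofReal_natCast]
  apply le_antisymm
  · refine le_of_forall_gt_imp_ge_of_dense fun M hM => ?_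
    obtain ⟨c, hLc, hcM⟩ := exists_between hM
    have hc0 : c ≠ 0 := (lt_of_le_of_lt zero_le hLc).ne'
    have hcT : c ≠ ⊤ := (hcM.trans_le le_top).ne
    obtain ⟨N, hN⟩ := eventually_atTop.1 (eventually_lt_of_limsup_lt hLc)
    have key : ∀ m : ℕ, 1 ≤ m → ((x m : ℝ≥0∞)) ^ (1/(m:ℝ)) < c → (x m : ℝ≥0∞) ≤ c ^ m := by
      intro m hm h
      have hm0 : (m:ℝ) ≠ 0 := Nat.cast_ne_zero.2 (by omega)
      have h2 := ENNReal.rpow_le_rpow (z := (m:ℝ)) h.le (Nat.cast_nonneg m)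
      rwa [← ENNReal.rpow_mul, one_div, inv_mul_cancel₀ hm0, ENNReal.rpow_one,
        ENNReal.rpow_natCast] at h2
    have hbound : ∀ᶠ n in atTop,
        (A * ((x (n+1) : ℝ≥0∞)) + B * ((x n : ℝ≥0∞))) ^ (1/(n:ℝ))
          ≤ (A*c+B) ^ (1/(n:ℝ)) * c := by
      filter_upwards [eventually_ge_atTop (max N 1)] with n hn
      have hn1 : 1 ≤ n := le_trans (le_max_right N 1) hn
      have hnN : N ≤ n := le_trans (le_max_left N 1) hn
      have hx1 : (x n : ℝ≥0∞) ≤ c ^ n := key n hn1 (hN n hnN)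
      have hx2 : (x (n+1) : ℝ≥0∞) ≤ c ^ (n+1) := key (n+1) (by omega) (hN (n+1) (by omega))
      have hFn : A * (x (n+1) : ℝ≥0∞) + B * (x n : ℝ≥0∞) ≤ (A*c+B) * c^n := by
        calc A * (x (n+1) : ℝ≥0∞) + B * (x n : ℝ≥0∞) ≤ A * c^(n+1) + B * c^n := by gcongr
          _ = (A*c+B) * c^n := by ring
      calc (A * (x (n+1) : ℝ≥0∞) + B * (x n : ℝ≥0∞)) ^ (1/(n:ℝ))
          ≤ ((A*c+B) * c^n) ^ (1/(n:ℝ)) := ENNReal.rpow_le_rpow hFn (by positivity)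
        _ = (A*c+B) ^ (1/(n:ℝ)) * (c^n) ^ (1/(n:ℝ)) :=
            ENNReal.mul_rpow_of_nonneg _ _ (by positivity)
        _ = (A*c+B) ^ (1/(n:ℝ)) * c := by
            rw [← ENNReal.rpow_natCast c n, ← ENNReal.rpow_mul, mul_one_div,
              div_self (Nat.cast_ne_zero.2 (by omega) : (n:ℝ) ≠ 0), ENNReal.rpow_one]
    have hK0 : A*c+B ≠ 0 := fun h => hB0 (add_eq_zero.mp h).2
    have hKT : A*c+B ≠ ⊤ := ENNReal.add_ne_top.2 ⟨ENNReal.mul_ne_top hAT hcT, hBT⟩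
    have htend : Tendsto (fun n : ℕ => (A*c+B) ^ (1/(n:ℝ)) * c) atTop (𝓝 c) := by
      have := ENNReal.Tendsto.mul_const (b := c) (aux_tendsto_one _ hK0 hKT) (Or.inl one_ne_zero)
      simpa using this
    calc limsup (fun n : ℕ => (A * ((x (n+1) : ℝ≥0∞)) + B * ((x n : ℝ≥0∞))) ^ (1/(n:ℝ))) atTop
        ≤ limsup (fun n : ℕ => (A*c+B) ^ (1/(n:ℝ)) * c) atTop := limsup_le_limsup hbound
      _ = c := htend.limsup_eq
      _ ≤ M := hcM.le
  · have h1 : ∀ n : ℕ, (x n : ℝ≥0∞) ^ (1/(n:ℝ)) * B ^ (1/(n:ℝ))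
        ≤ (A * ((x (n+1) : ℝ≥0∞)) + B * ((x n : ℝ≥0∞))) ^ (1/(n:ℝ)) := by
      intro n
      rw [← ENNReal.mul_rpow_of_nonneg _ _ (by positivity)]
      exact ENNReal.rpow_le_rpow (by rw [mul_comm]; exact le_add_self) (by positivity)
    have hliminf : liminf (fun n : ℕ => B ^ (1/(n:ℝ))) atTop = 1 :=
      (aux_tendsto_one B hB0 hBT).liminf_eq
    calc limsup (fun n : ℕ => (x n : ℝ≥0∞) ^ (1/(n:ℝ))) atTop
        = limsup (fun n : ℕ => (x n : ℝ≥0∞) ^ (1/(n:ℝ))) atTop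
            * liminf (fun n : ℕ => B ^ (1/(n:ℝ))) atTop := by rw [hliminf, mul_one]
      _ ≤ limsup ((fun n : ℕ => (x n : ℝ≥0∞) ^ (1/(n:ℝ)))
            * (fun n : ℕ => B ^ (1/(n:ℝ)))) atTop := ENNReal.le_limsup_mul
      _ ≤ limsup (fun n : ℕ => (A * ((x (n+1) : ℝ≥0∞)) + B * ((x n : ℝ≥0∞))) ^ (1/(n:ℝ))) atTop :=
          limsup_le_limsup (Eventually.of_forall fun n => h1 n)

end
end

section
/- Let {a_n} and {b_n} be sequences of non-negative integers and P(t) a nonzero polynomial with non-negative integer coefficients such that the identity of formal Laurent series Σ a_n t^n = (Σ b_n t^n)·P(1/t) holds. Then cx({b_n}) ≤ cx({a_n}) and limsup b_n^{1/n} ≤ limsup a_n^{1/n}. -/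
open CategoryTheory Filter IsLocalRing
open scoped ENNReal

noncomputable section

lemma limsup_shift (g : ℕ → ℝ≥0∞) (j : ℕ) :
    atTop.limsup (fun n => g (n - j)) = atTop.limsup g := by
  conv_rhs => rw [← Filter.map_sub_atTop_eq_nat j]
  simp only [Filter.limsup, Filter.map_map]
  rfl

theorem stmt5 (a b : ℕ → ℕ) (P : Polynomial ℕ) (hP : P ≠ 0)
    (h : ∀ n, a n = ∑ i ∈ Finset.range (P.natDegree + 1), b (n + i) * P.coeff i) :
    seqCx (fun n => (b n : ℝ)) ≤ seqCx (fun n => (a n : ℝ)) ∧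
      seqCurv (fun n => (b n : ℝ)) ≤ seqCurv (fun n => (a n : ℝ)) := by
  set j := P.natDegree with hj
  have hcoeff : 1 ≤ P.coeff j :=
    Nat.one_le_iff_ne_zero.2 (Polynomial.leadingCoeff_ne_zero.2 hP)
  have key : ∀ n, b (n + j) ≤ a n := by
    intro n
    rw [h n]
    calc b (n + j) ≤ b (n + j) * P.coeff j := Nat.le_mul_of_pos_right _ hcoeff
      _ ≤ ∑ i ∈ Finset.range (j + 1), b (n + i) * P.coeff i :=
        Finset.single_le_sum (f := fun i => b (n + i) * P.coeff i)
          (fun i _ => Nat.zero_le _) (Finset.self_mem_range_succ j)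
  have key' : ∀ n, j ≤ n → b n ≤ a (n - j) := by
    intro n hn
    have := key (n - j)
    rwa [Nat.sub_add_cancel hn] at this
  constructor
  · apply sInf_le_sInf
    rintro x ⟨c, rfl, α, hα, hev⟩
    refine ⟨c, rfl, 2 * α, by linarith, ?_⟩
    rw [eventually_atTop] at hev ⊢
    obtain ⟨N, hN⟩ := hev
    refine ⟨N + 2 * j + 1, fun n hn => ?_⟩
    have hnj : j ≤ n := by omega
    have h1 : (b n : ℝ) ≤ (a (n - j) : ℝ) := by exact_mod_cast key' n hnj
    have h2 : (a (n - j) : ℝ) ≤ α * ((n - j : ℕ) : ℝ) ^ ((c : ℤ) - 1) := hN _ (by omega)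
    refine h1.trans (h2.trans ?_)
    have hcast : ((n - j : ℕ) : ℝ) = (n : ℝ) - (j : ℝ) := by
      push_cast [hnj]; ring
    have hnpos : (0 : ℝ) < (n : ℝ) := by exact_mod_cast (by omega : 0 < n)
    have hmpos : (0 : ℝ) < (n : ℝ) - (j : ℝ) := by
      have : (0 : ℝ) < ((n - j : ℕ) : ℝ) := by exact_mod_cast (by omega : 0 < n - j)
      rwa [hcast] at this
    rcases c with _ | k
    · have hle : (n : ℝ) ≤ 2 * ((n : ℝ) - (j : ℝ)) := by
        have h3 : (2 * j + 1 : ℕ) ≤ n := by omega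
        have h4 : ((2 * j + 1 : ℕ) : ℝ) ≤ (n : ℝ) := by exact_mod_cast h3
        push_cast at h4; linarith
      simp only [Nat.cast_zero, zero_sub, zpow_neg, zpow_one]
      rw [hcast, ← div_eq_mul_inv, ← div_eq_mul_inv, div_le_div_iff₀ hmpos hnpos]
      nlinarith
    · have he : ((k + 1 : ℕ) : ℤ) - 1 = (k : ℤ) := by push_cast; ring
      rw [he, zpow_natCast, zpow_natCast, hcast]
      have hpow : ((n : ℝ) - (j : ℝ)) ^ k ≤ (n : ℝ) ^ k :=
        pow_le_pow_left₀ hmpos.le (by linarith) k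
      nlinarith [pow_nonneg hnpos.le k, pow_nonneg hmpos.le k]
  · show seqCurv _ ≤ seqCurv _
    unfold seqCurv
    have step1 : atTop.limsup (fun n => (ENNReal.ofReal ((b n : ℕ) : ℝ)) ^ (1 / (n : ℝ))) ≤
        atTop.limsup (fun n =>
          (ENNReal.ofReal ((a (n - j) : ℕ) : ℝ)) ^ (1 / ((n - j : ℕ) : ℝ))) := by
      refine limsup_le_limsup ?_ isCobounded_le_of_bot isBounded_le_of_top
      filter_upwards [eventually_ge_atTop (j + 1)] with n hn
      have hm : 1 ≤ n - j := by omega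
      have hb : b n ≤ a (n - j) := key' n (by omega)
      rcases Nat.eq_zero_or_pos (a (n - j)) with h0 | hpos
      · have hb0 : b n = 0 := by omega
        rw [hb0]
        simp only [Nat.cast_zero, ENNReal.ofReal_zero]
        have hn0 : (0:ℝ) < (n:ℝ) := by exact_mod_cast (by omega : 0 < n)
        rw [ENNReal.zero_rpow_of_pos (by positivity)]
        exact zero_le
      · have h1 : ENNReal.ofReal ((b n : ℕ) : ℝ) ≤ ENNReal.ofReal ((a (n - j) : ℕ) : ℝ) :=
          ENNReal.ofReal_le_ofReal (by exact_mod_cast hb)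
        have hone : (1 : ℝ≥0∞) ≤ ENNReal.ofReal ((a (n - j) : ℕ) : ℝ) := by
          rw [show (1:ℝ≥0∞) = ENNReal.ofReal 1 by simp]
          exact ENNReal.ofReal_le_ofReal (by exact_mod_cast hpos)
        calc (ENNReal.ofReal ((b n : ℕ) : ℝ)) ^ (1 / (n : ℝ))
            ≤ (ENNReal.ofReal ((a (n - j) : ℕ) : ℝ)) ^ (1 / (n : ℝ)) :=
              ENNReal.rpow_le_rpow h1 (by positivity)
          _ ≤ (ENNReal.ofReal ((a (n - j) : ℕ) : ℝ)) ^ (1 / ((n - j : ℕ) : ℝ)) := by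
              apply ENNReal.rpow_le_rpow_of_exponent_le hone
              have h1' : (0:ℝ) < ((n - j : ℕ) : ℝ) := by exact_mod_cast hm
              have h2' : ((n - j : ℕ) : ℝ) ≤ (n : ℝ) := by exact_mod_cast Nat.sub_le n j
              exact one_div_le_one_div_of_le h1' h2'
    refine step1.trans (le_of_eq ?_)
    exact limsup_shift (fun m => (ENNReal.ofReal ((a m : ℕ) : ℝ)) ^ (1 / (m : ℝ))) j

end
end
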